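/- Let Γ be an infinite group with a finite generating set S, equipped with the word metric d_S. Then for every g ∈ Γ there exists a map α : ℤ → Γ with α(0) = g and d_S(α(m), α(n)) = |m − n| for all m, n ∈ ℤ (a bi-infinite geodesic through g). -/

import Mathlib

/-- The word metric on a group `Γ` relative to a generating set `S`:
`wordDist S g h` is the least `n` such that `g⁻¹ * h` is a product of `n`
elements of `S ∪ S⁻¹`. -/
noncomputable def wordDist {Γ : Type*} [Group Γ] (S : Set Γ) (g h : Γ) : ℕ :=
  sInf {n : ℕ | ∃ l : List Γ, l.length = n ∧ (∀ a ∈ l, a ∈ S ∨ a⁻¹ ∈ S) ∧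
    l.prod = g⁻¹ * h}

namespace WordDistAux

variable {Γ : Type*} [Group Γ] {S : Set Γ}

lemma set_nonempty (hgen : Subgroup.closure S = ⊤) (g h : Γ) :
    {n : ℕ | ∃ l : List Γ, l.length = n ∧ (∀ a ∈ l, a ∈ S ∨ a⁻¹ ∈ S) ∧
      l.prod = g⁻¹ * h}.Nonempty := by
  have hx : g⁻¹ * h ∈ Submonoid.closure (S ∪ S⁻¹) := by
    rw [← Subgroup.closure_toSubmonoid, hgen]
    simp
  obtain ⟨l, hl, hp⟩ := Submonoid.exists_list_of_mem_closure hx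
  refine ⟨l.length, l, rfl, fun a ha => ?_, hp⟩
  rcases hl a ha with h' | h'
  · exact Or.inl h'
  · exact Or.inr (Set.mem_inv.mp h')

lemma spec (hgen : Subgroup.closure S = ⊤) (g h : Γ) :
    ∃ l : List Γ, l.length = wordDist S g h ∧ (∀ a ∈ l, a ∈ S ∨ a⁻¹ ∈ S) ∧
      l.prod = g⁻¹ * h :=
  Nat.sInf_mem (set_nonempty hgen g h)

lemma dist_le (g h : Γ) (l : List Γ) (hl : ∀ a ∈ l, a ∈ S ∨ a⁻¹ ∈ S)
    (hp : l.prod = g⁻¹ * h) : wordDist S g h ≤ l.length :=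
  Nat.sInf_le ⟨l, rfl, hl, hp⟩

lemma left_invariant (a g h : Γ) : wordDist S (a * g) (a * h) = wordDist S g h := by
  unfold wordDist
  congr 1
  ext n
  constructor <;> rintro ⟨l, h1, h2, h3⟩ <;> exact ⟨l, h1, h2, by rw [h3]; group⟩

lemma symm_le (hgen : Subgroup.closure S = ⊤) (g h : Γ) :
    wordDist S g h ≤ wordDist S h g := by
  obtain ⟨l, hlen, hl, hp⟩ := spec hgen h g
  have := dist_le (S:=S) g h ((l.map fun x => x⁻¹).reverse) ?_ ?_
  · simpa [hlen] using this
  · intro a ha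
    simp only [List.mem_reverse, List.mem_map] at ha
    obtain ⟨b, hb, rfl⟩ := ha
    rcases hl b hb with h' | h'
    · exact Or.inr (by simpa using h')
    · exact Or.inl h'
  · rw [← List.prod_inv_reverse, hp]
    group

lemma symm (hgen : Subgroup.closure S = ⊤) (g h : Γ) :
    wordDist S g h = wordDist S h g :=
  le_antisymm (symm_le hgen g h) (symm_le hgen h g)

lemma triangle (hgen : Subgroup.closure S = ⊤) (g h k : Γ) :
    wordDist S g k ≤ wordDist S g h + wordDist S h k := by
  obtain ⟨l1, hlen1, hl1, hp1⟩ := spec hgen g h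
  obtain ⟨l2, hlen2, hl2, hp2⟩ := spec hgen h k
  have := dist_le (S:=S) g k (l1 ++ l2) ?_ ?_
  · simpa [hlen1, hlen2] using this
  · intro a ha
    rcases List.mem_append.mp ha with h' | h'
    · exact hl1 a h'
    · exact hl2 a h'
  · rw [List.prod_append, hp1, hp2]
    group

/-- Products of lists of length at most `n` with letters in `S ∪ S⁻¹`. -/
def ball (S : Set Γ) (n : ℕ) : Set Γ :=
  {h : Γ | ∃ l : List Γ, l.length ≤ n ∧ (∀ a ∈ l, a ∈ S ∨ a⁻¹ ∈ S) ∧ l.prod = h}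

lemma ball_finite (hfin : S.Finite) (n : ℕ) : (ball S n).Finite := by
  induction n with
  | zero =>
    apply Set.Finite.subset (Set.finite_singleton (1 : Γ))
    rintro h ⟨l, hlen, -, hp⟩
    rw [Nat.le_zero, List.length_eq_zero_iff] at hlen
    simp [hlen] at hp
    simp [← hp]
  | succ n ih =>
    have hA : (S ∪ S⁻¹).Finite := hfin.union hfin.inv
    apply Set.Finite.subset ((hA.biUnion fun a _ => (ih.image fun x => a * x)).union ih)
    rintro h ⟨l, hlen, hl, hp⟩
    match l with
    | [] => exact Or.inr ⟨[], by simp, by simp, hp⟩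
    | a :: t =>
      left
      have ha : a ∈ S ∪ S⁻¹ := by
        rcases hl a List.mem_cons_self with h' | h'
        · exact Or.inl h'
        · exact Or.inr (Set.mem_inv.mpr h')
      refine Set.mem_biUnion ha ⟨t.prod, ⟨t, ?_, fun b hb => hl b (List.mem_cons_of_mem a hb), rfl⟩, ?_⟩
      · simpa using Nat.le_of_succ_le_succ hlen
      · rw [← hp]; simp
  
lemma ball_mem (hgen : Subgroup.closure S = ⊤) {g h : Γ} {n : ℕ}
    (hd : wordDist S g h ≤ n) : g⁻¹ * h ∈ ball S n := by
  obtain ⟨l, hlen, hl, hp⟩ := spec hgen g h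
  exact ⟨l, hlen.le.trans hd, hl, hp⟩

lemma exists_far (hfin : S.Finite) (hgen : Subgroup.closure S = ⊤) [Infinite Γ] (n : ℕ) :
    ∃ w : Γ, n ≤ wordDist S 1 w := by
  by_contra hcon
  push_neg at hcon
  apply Set.infinite_univ (α := Γ)
  apply Set.Finite.subset ((ball_finite hfin n).image fun x => x)
  intro w _
  refine ⟨w, ?_, rfl⟩
  simpa using ball_mem hgen (hcon w).le

section Prefix

variable (l : List Γ)

/-- Prefix products form a geodesic. -/
lemma prefix_geodesic (hgen : Subgroup.closure S = ⊤)
    (hlen : l.length = wordDist S 1 l.prod) (hl : ∀ a ∈ l, a ∈ S ∨ a⁻¹ ∈ S)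
    {i j : ℕ} (hij : i ≤ j) (hj : j ≤ l.length) :
    wordDist S (l.take i).prod (l.take j).prod = j - i := by
  have upper : ∀ i j : ℕ, i ≤ j → j ≤ l.length →
      wordDist S (l.take i).prod (l.take j).prod ≤ j - i := by
    intro i j hij hj
    have key : l.take j = l.take i ++ (l.drop i).take (j - i) := by
      rw [← List.take_add]
      congr 1
      omega
    have := dist_le (S:=S) (l.take i).prod (l.take j).prod ((l.drop i).take (j - i))
      (fun a ha => hl a (List.drop_subset i l (List.take_subset _ _ ha)))
      (by rw [key, List.prod_append]; group)
    apply this.trans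
    rw [List.length_take, List.length_drop]
    omega
  refine le_antisymm (upper i j hij hj) ?_
  have h0L : wordDist S (l.take 0).prod (l.take l.length).prod = l.length := by
    simp only [List.take_length, List.take_zero, List.prod_nil]
    omega
  have t1 := triangle hgen (l.take 0).prod (l.take i).prod (l.take j).prod
  have t2 := triangle hgen (l.take 0).prod (l.take j).prod (l.take l.length).prod
  have u1 := upper 0 i (Nat.zero_le _) (hij.trans hj)
  have u2 := upper j l.length hj le_rfl
  omega

end Prefix

lemma stage {Γ : Type*} [Group Γ] [Infinite Γ] (S : Set Γ)
    (hfin : S.Finite) (hgen : Subgroup.closure S = ⊤) (g : Γ) (n : ℕ) :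
    ∃ f : ℤ → Γ, f 0 = g ∧ ∀ s t : ℤ, s.natAbs ≤ n → t.natAbs ≤ n →
      wordDist S (f s) (f t) = (s - t).natAbs := by
  obtain ⟨w, hw⟩ := exists_far hfin hgen (2 * n)
  obtain ⟨l, hlen, hl, hp⟩ := spec hgen 1 w
  rw [inv_one, one_mul] at hp
  subst hp
  set p : ℕ → Γ := fun i => (l.take i).prod with hpdef
  have hL : 2 * n ≤ l.length := by omega
  refine ⟨fun t => g * (p n)⁻¹ * p (t + n).toNat, by simp, ?_⟩
  have key : ∀ s t : ℤ, s.natAbs ≤ n → t.natAbs ≤ n → s ≤ t →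
      wordDist S (g * (p n)⁻¹ * p (s + n).toNat) (g * (p n)⁻¹ * p (t + n).toNat)
        = (s - t).natAbs := by
    intro s t hs ht hst
    rw [left_invariant]
    have := prefix_geodesic l hgen hlen hl
      (i := (s + n).toNat) (j := (t + n).toNat) (by omega) (by omega)
    rw [this]
    omega
  intro s t hs ht
  rcases le_total s t with h | h
  · exact key s t hs ht h
  · rw [symm hgen, key t s ht hs h]
    omega

end WordDistAux

/-- In an infinite finitely generated group, every element lies on a bi-infinite
geodesic for the word metric. -/
theorem exists_biinfinite_geodesic
    {Γ : Type*} [Group Γ] [Infinite Γ]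
    (S : Set Γ) (hfin : S.Finite) (hgen : Subgroup.closure S = ⊤)
    (g : Γ) :
    ∃ α : ℤ → Γ, α 0 = g ∧ ∀ m n : ℤ, wordDist S (α m) (α n) = (m - n).natAbs := by
  classical
  choose F hF0 hFgeo using fun n : ℕ => WordDistAux.stage S hfin hgen g n
  set U : Ultrafilter ℕ := Filter.hyperfilter ℕ with hU
  -- for each t, eventually the values lie in a fixed finite ball around g
  have hbig : ∀ t : ℤ, {k : ℕ | t.natAbs ≤ k} ∈ U := by
    intro t
    exact Nat.hyperfilter_le_atTop (Filter.mem_atTop _)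
  have hball : ∀ t : ℤ, ∃ v : Γ, {k : ℕ | F k t = v} ∈ U := by
    intro t
    set B : Set Γ := (fun x => g * x) '' WordDistAux.ball S t.natAbs with hB
    have hBfin : B.Finite := (WordDistAux.ball_finite hfin _).image _
    have hBelem : {k : ℕ | F k t ∈ B} ∈ U := by
      filter_upwards [hbig t] with k hk
      have h1 : wordDist S (F k 0) (F k t) = t.natAbs := by
        simpa using hFgeo k 0 t (by simp) hk
      rw [hF0 k] at h1
      exact ⟨g⁻¹ * (F k t), WordDistAux.ball_mem hgen h1.le, by group⟩
    have : (⋃ v ∈ B, {k : ℕ | F k t = v}) ∈ U := by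
      apply Filter.mem_of_superset hBelem
      intro k hk
      exact Set.mem_biUnion hk rfl
    obtain ⟨v, -, hv⟩ := (Ultrafilter.finite_biUnion_mem_iff hBfin).mp this
    exact ⟨v, hv⟩
  choose α hα using hball
  refine ⟨α, ?_, ?_⟩
  · obtain ⟨k, hk⟩ := Filter.nonempty_of_mem (hα 0)
    rw [← hk, hF0]
  · intro m n
    have hmem : ({k : ℕ | F k m = α m} ∩ {k : ℕ | F k n = α n} ∩
        ({k : ℕ | m.natAbs ≤ k} ∩ {k : ℕ | n.natAbs ≤ k})) ∈ U :=
      Filter.inter_mem (Filter.inter_mem (hα m) (hα n))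
        (Filter.inter_mem (hbig m) (hbig n))
    obtain ⟨k, ⟨⟨h1, h2⟩, h3, h4⟩⟩ := Filter.nonempty_of_mem hmem
    rw [← h1, ← h2]
    exact hFgeo k m n h3 h4
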